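/- arXiv:1005.1726 — 2 statements merged into one kernel-verified Lean document; each statement's English description precedes it below -/
import Mathlib

section
/- Let G = (V,E) be a finite simple graph and M ⊆ E a matching in G (a set of pairwise non-incident edges) such that for every matching edge e = {u,v} ∈ M, both u and v are adjacent to every other vertex w ∈ V \ {u,v}. Then Q(G−M, x) = Σ_{I ⊆ M} (−x)^{|I|} · Q(G†I, x), where G−M is the graph obtained from G by deleting all edges of M, and G†I denotes the graph obtained from G by deleting, for every edge of I, both of its endpoints (together with all incident edges). -/
open Finset

variable {V : Type*} [Fintype V] [DecidableEq V]

/-- `P` is a set partition of the vertex set `V`, given as a finset of (nonempty,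
pairwise disjoint, covering) blocks. -/
def IsPartition (P : Finset (Finset V)) : Prop :=
  ∅ ∉ P ∧ ∀ v : V, ∃! B : Finset V, B ∈ P ∧ v ∈ B

/-- `P` is a connected set partition of `G`: every block induces a connected subgraph. -/
def IsConnPartition (G : SimpleGraph V) (P : Finset (Finset V)) : Prop :=
  IsPartition P ∧ ∀ B ∈ P, (G.induce (B : Set V)).Connected

open scoped Classical in
/-- The finset of all connected set partitions (`Π_c(G)`). -/
noncomputable def connParts (G : SimpleGraph V) : Finset (Finset (Finset V)) :=
  Finset.univ.filter (IsConnPartition G)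

open scoped Classical in
/-- The partition polynomial `Q(G,x) = Σ_{π ∈ Π_c(G)} x^{|π|}`, evaluated at `x : ℤ`. -/
noncomputable def Q (G : SimpleGraph V) (x : ℤ) : ℤ :=
  ∑ P ∈ connParts G, x ^ P.card


open SimpleGraph

set_option linter.unusedSectionVars false
set_option linter.unusedVariables false

open scoped Classical

/-- The endpoint set of an edge, as a finset. -/
noncomputable def eb (e : Sym2 V) : Finset V := Finset.univ.filter (· ∈ e)

lemma mem_eb {e : Sym2 V} {v : V} : v ∈ eb e ↔ v ∈ e := by simp [eb]

lemma reach_trans {α : Type*} {H₁ H₂ : SimpleGraph α}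
    (h : ∀ a b, H₁.Adj a b → H₂.Reachable a b) {a b : α} (hr : H₁.Reachable a b) :
    H₂.Reachable a b := by
  obtain ⟨w⟩ := hr
  induction w with
  | nil => exact SimpleGraph.Reachable.refl _
  | cons h' p ih => exact (h _ _ h').trans ih

lemma connected_of_pair {G : SimpleGraph V} {B : Finset V} {u v : V} (hu : u ∈ B) (hv : v ∈ B)
    (hall : ∀ a ∈ B, a = u ∨ a = v) (hadj : G.Adj u v) :
    (G.induce (B : Set V)).Connected := by
  rw [connected_iff]
  refine ⟨fun a b => ?_, ⟨⟨u, by simpa using hu⟩⟩⟩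
  have key : ∀ c d : (B : Set V), (c : V) = u → (d : V) = v →
      (G.induce (B : Set V)).Reachable c d := by
    intro c d hc hd
    exact SimpleGraph.Adj.reachable (by show G.Adj ↑c ↑d; rw [hc, hd]; exact hadj)
  have ha := hall a a.2
  have hb := hall b b.2
  have hrefl : ∀ c d : (B : Set V), (c : V) = (d : V) → (G.induce (B : Set V)).Reachable c d := by
    intro c d h; rw [Subtype.ext h]
  rcases ha with ha | ha <;> rcases hb with hb | hb
  · exact hrefl a b (ha.trans hb.symm)
  · exact key a b ha hb
  · exact (key b a hb ha).symm
  · exact hrefl a b (ha.trans hb.symm)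

lemma edge_block_not_connected {G : SimpleGraph V} {M : Set (Sym2 V)} {e : Sym2 V}
    (heM : e ∈ M) (hne : ¬ e.IsDiag) :
    ¬ ((G.deleteEdges M).induce ((eb e : Finset V) : Set V)).Connected := by
  induction e with
  | _ u v =>
    rw [Sym2.mk_isDiag_iff] at hne
    intro hcon
    have hmem : ∀ a : ((eb s(u,v) : Finset V) : Set V), (a : V) = u ∨ (a : V) = v := by
      intro a
      have h2 : (a : V) ∈ eb s(u,v) := by exact_mod_cast a.2
      rw [mem_eb, Sym2.mem_iff] at h2
      exact h2
    have noadj : ∀ a b : ((eb s(u,v) : Finset V) : Set V),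
        ¬ ((G.deleteEdges M).induce ((eb s(u,v) : Finset V) : Set V)).Adj a b := by
      intro a b hab
      have hab' : (G.deleteEdges M).Adj ↑a ↑b := hab
      rw [deleteEdges_adj] at hab'
      rcases hmem a with ha | ha <;> rcases hmem b with hb | hb
      · exact hab'.1.ne (ha.trans hb.symm)
      · exact hab'.2 (by rw [ha, hb]; exact heM)
      · exact hab'.2 (by rw [ha, hb, Sym2.eq_swap]; exact heM)
      · exact hab'.1.ne (ha.trans hb.symm)
    have hu : u ∈ eb s(u,v) := by simp [mem_eb]
    have hv : v ∈ eb s(u,v) := by simp [mem_eb]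
    have hr := hcon.preconnected ⟨u, by simpa using hu⟩ ⟨v, by simpa using hv⟩
    have : (⊥ : SimpleGraph _).Reachable
        (⟨u, by simpa using hu⟩ : ((eb s(u,v) : Finset V) : Set V)) ⟨v, by simpa using hv⟩ :=
      reach_trans (fun a b hab => absurd hab (noadj a b)) hr
    rw [reachable_bot] at this
    exact hne (by simpa using this)

lemma block_connected_del {G : SimpleGraph V} {M : Finset (Sym2 V)}
    (hmatch : ∀ e ∈ M, ∀ f ∈ M, e ≠ f → ∀ v : V, v ∈ e → v ∉ f)
    (hdom : ∀ e ∈ M, ∀ u : V, u ∈ e → ∀ w : V, w ∉ e → G.Adj u w)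
    {B : Finset V} (hc : (G.induce (B : Set V)).Connected)
    (hB : ∀ e ∈ M, (∀ v ∈ e, v ∈ B) → ∃ w ∈ B, w ∉ e) :
    ((G.deleteEdges (M : Set (Sym2 V))).induce (B : Set V)).Connected := by
  rw [connected_iff] at hc ⊢
  refine ⟨fun a b => ?_, hc.2⟩
  refine reach_trans ?_ (hc.1 a b)
  intro a b hab
  have hab' : G.Adj ↑a ↑b := hab
  by_cases hM : s(↑a, ↑b) ∈ M
  · obtain ⟨w, hwB, hwe⟩ := hB _ hM (by
      intro v hv
      rw [Sym2.mem_iff] at hv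
      rcases hv with rfl | rfl
      · exact a.2
      · exact b.2)
    have haw : G.Adj ↑a w := hdom _ hM ↑a (by simp) w hwe
    have hwb : G.Adj w ↑b := (hdom _ hM ↑b (by simp) w hwe).symm
    have hawM : s(↑a, w) ∉ M := by
      intro hf
      rcases eq_or_ne s(↑a, w) s(↑a, ↑b) with h | h
      · exact hwe (by rw [← h]; simp)
      · exact hmatch _ hf _ hM h ↑a (by simp) (by simp)
    have hwbM : s(w, ↑b) ∉ M := by
      intro hf
      rcases eq_or_ne s(w, ↑b) s(↑a, ↑b) with h | h
      · exact hwe (by rw [← h]; simp)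
      · exact hmatch _ hf _ hM h ↑b (by simp) (by simp)
    have h1 : ((G.deleteEdges (M : Set (Sym2 V))).induce (B : Set V)).Adj a
        ⟨w, by simpa using hwB⟩ := by
      show (G.deleteEdges (M : Set (Sym2 V))).Adj ↑a w
      rw [deleteEdges_adj]
      exact ⟨haw, by simpa using hawM⟩
    have h2 : ((G.deleteEdges (M : Set (Sym2 V))).induce (B : Set V)).Adj
        (⟨w, by simpa using hwB⟩ : (B : Set V)) b := by
      show (G.deleteEdges (M : Set (Sym2 V))).Adj w ↑b
      rw [deleteEdges_adj]
      exact ⟨hwb, by simpa using hwbM⟩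
    exact h1.reachable.trans h2.reachable
  · refine SimpleGraph.Adj.reachable ?_
    show (G.deleteEdges (M : Set (Sym2 V))).Adj ↑a ↑b
    rw [deleteEdges_adj]
    exact ⟨hab', by simpa using hM⟩

lemma mem_connParts {G : SimpleGraph V} {P : Finset (Finset V)} :
    P ∈ connParts G ↔ IsConnPartition G P := by simp [connParts]

lemma connParts_del (G : SimpleGraph V) (M : Finset (Sym2 V))
    (hME : (M : Set (Sym2 V)) ⊆ G.edgeSet)
    (hmatch : ∀ e ∈ M, ∀ f ∈ M, e ≠ f → ∀ v : V, v ∈ e → v ∉ f)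
    (hdom : ∀ e ∈ M, ∀ u : V, u ∈ e → ∀ w : V, w ∉ e → G.Adj u w) :
    connParts (G.deleteEdges (M : Set (Sym2 V)))
      = (connParts G).filter (fun P => ∀ e ∈ M, eb e ∉ P) := by
  ext P
  simp only [mem_connParts, mem_filter, mem_connParts]
  constructor
  · rintro ⟨hpart, hconn⟩
    refine ⟨⟨hpart, fun B hB => ?_⟩, fun e heM hebP => ?_⟩
    · refine (hconn B hB).mono ?_
      intro a b hab
      have h : (G.deleteEdges (M : Set (Sym2 V))).Adj ↑a ↑b := hab
      rw [deleteEdges_adj] at h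
      exact h.1
    · exact edge_block_not_connected (by simpa using heM)
        (G.not_isDiag_of_mem_edgeSet (hME heM)) (hconn _ hebP)
  · rintro ⟨⟨hpart, hconn⟩, hgood⟩
    refine ⟨hpart, fun B hB => ?_⟩
    refine block_connected_del hmatch hdom (hconn B hB) ?_
    intro e heM hsub
    have hne : B ≠ eb e := fun h => hgood e heM (h ▸ hB)
    have hss : eb e ⊂ B :=
      Finset.ssubset_iff_subset_ne.mpr ⟨fun v hv => hsub v (mem_eb.mp hv), fun h => hne h.symm⟩
    obtain ⟨w, hwB, hwe⟩ := Finset.exists_of_ssubset hss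
    exact ⟨w, hwB, fun hc => hwe (mem_eb.mpr hc)⟩

lemma biso_aux1 {S : Set V} {B' : Finset S}
    (a : ((B'.image Subtype.val : Finset V) : Set V)) : (a : V) ∈ S := by
  obtain ⟨b, hb, he⟩ := Finset.mem_image.mp (by exact_mod_cast a.2)
  exact he ▸ b.2

lemma biso_aux2 {S : Set V} {B' : Finset S}
    (a : ((B'.image Subtype.val : Finset V) : Set V)) :
    (⟨(a : V), biso_aux1 a⟩ : S) ∈ (B' : Set S) := by
  obtain ⟨b, hb, he⟩ := Finset.mem_image.mp (by exact_mod_cast a.2)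
  have : b = ⟨(a : V), biso_aux1 a⟩ := Subtype.ext he
  exact this ▸ hb

noncomputable def blockIso (G : SimpleGraph V) (S : Set V) (B' : Finset S) :
    ((G.induce S).induce ((B' : Set S))) ≃g
      (G.induce ((B'.image Subtype.val : Finset V) : Set V)) where
  toFun a := ⟨(a : S), by
    simp only [Finset.coe_image, Set.mem_image, Finset.mem_coe]
    exact ⟨a.1, a.2, rfl⟩⟩
  invFun a := ⟨⟨(a : V), biso_aux1 a⟩, biso_aux2 a⟩
  left_inv a := by apply Subtype.ext; apply Subtype.ext; rfl
  right_inv a := by apply Subtype.ext; rfl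
  map_rel_iff' := Iff.rfl

lemma connected_lift {G : SimpleGraph V} {S : Set V} {B' : Finset S} :
    ((G.induce S).induce ((B' : Set S))).Connected ↔
      (G.induce ((B'.image Subtype.val : Finset V) : Set V)).Connected :=
  (blockIso G S B').connected_iff

lemma eb_connected {G : SimpleGraph V} {e : Sym2 V} (he : e ∈ G.edgeSet) :
    (G.induce ((eb e : Finset V) : Set V)).Connected := by
  induction e with
  | _ u v =>
    have hadj : G.Adj u v := he
    exact connected_of_pair (mem_eb.mpr (by simp)) (mem_eb.mpr (by simp))
      (fun a ha => by simpa [mem_eb] using ha) hadj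

lemma eb_injOn {I : Finset (Sym2 V)}
    (hImatch : ∀ e ∈ I, ∀ f ∈ I, e ≠ f → ∀ v : V, v ∈ e → v ∉ f) :
    Set.InjOn eb (I : Set (Sym2 V)) := by
  intro e he f hf h
  by_contra hne
  have hu : e.out.1 ∈ e := Sym2.out_fst_mem e
  have : e.out.1 ∈ eb f := h ▸ mem_eb.mpr hu
  exact hImatch e he f hf hne e.out.1 hu (mem_eb.mp this)

noncomputable def subT (S : Set V) (B : Finset V) : Finset S :=
  B.subtype (· ∈ S)

lemma mem_subT {S : Set V} {B : Finset V} {a : S} : a ∈ subT S B ↔ (a : V) ∈ B :=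
  Finset.mem_subtype

lemma subT_image_val {S : Set V} {B : Finset V} (hBp : ∀ v ∈ B, v ∈ S) :
    (subT S B).image Subtype.val = B := by
  ext a
  simp only [Finset.mem_image]
  constructor
  · rintro ⟨b, hb, rfl⟩; exact mem_subT.mp hb
  · intro ha; exact ⟨⟨a, hBp a ha⟩, mem_subT.mpr ha, rfl⟩

lemma image_val_subT {S : Set V} (B' : Finset S) :
    subT S (B'.image Subtype.val) = B' := by
  ext a
  rw [mem_subT]
  simp only [Finset.mem_image]
  constructor
  · rintro ⟨b, hb, he⟩; rwa [Subtype.ext he] at hb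
  · intro ha; exact ⟨a, ha, rfl⟩

set_option maxHeartbeats 1000000 in
lemma sum_filter_eb (G : SimpleGraph V) (I : Finset (Sym2 V))
    (hIE : ∀ e ∈ I, e ∈ G.edgeSet)
    (hImatch : ∀ e ∈ I, ∀ f ∈ I, e ≠ f → ∀ v : V, v ∈ e → v ∉ f) (x : ℤ) :
    ∑ P ∈ (connParts G).filter (fun P => ∀ e ∈ I, eb e ∈ P), x ^ P.card
      = x ^ I.card * Q (G.induce {v : V | ∀ e ∈ I, v ∉ e}) x := by
  set S : Set V := {v : V | ∀ e ∈ I, v ∉ e} with hS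
  have hmemS : ∀ v : V, v ∈ S ↔ ∀ e ∈ I, v ∉ e := fun v => Iff.rfl
  set EB : Finset (Finset V) := I.image eb with hEB
  rw [Q, mul_sum]
  have fact3 : ∀ P, P ∈ connParts G → (∀ e ∈ I, eb e ∈ P) →
      ∀ B ∈ P, B ∉ EB → ∀ v ∈ B, v ∈ S := by
    intro P hP heb B hBP hBEB v hvB e he hve
    obtain ⟨C, hC, huniq⟩ := (mem_connParts.mp hP).1.2 v
    have h1 : B = C := huniq B ⟨hBP, hvB⟩
    have h2 : eb e = C := huniq (eb e) ⟨heb e he, mem_eb.mpr hve⟩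
    exact hBEB (by rw [h1, ← h2]; exact Finset.mem_image_of_mem _ he)
  have factsub : ∀ P, (∀ e ∈ I, eb e ∈ P) → EB ⊆ P := by
    intro P heb B hB
    obtain ⟨e, he, rfl⟩ := Finset.mem_image.mp hB
    exact heb e he
  refine Finset.sum_nbij'
    (i := fun P => Finset.image (subT S) (P \ EB))
    (j := fun P' => P'.image (Finset.image Subtype.val) ∪ EB) ?_ ?_ ?_ ?_ ?_
  · intro P hP
    rw [Finset.mem_filter] at hP
    obtain ⟨hPc, heb⟩ := hP
    obtain ⟨⟨hne, hcov⟩, hconn⟩ := mem_connParts.mp hPc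
    rw [mem_connParts]
    refine ⟨⟨?_, ?_⟩, ?_⟩
    · intro hmem
      obtain ⟨B, hB, hBe⟩ := Finset.mem_image.mp hmem
      rw [Finset.mem_sdiff] at hB
      have hBne : B ≠ ∅ := fun h => hne (h ▸ hB.1)
      obtain ⟨v, hv⟩ := Finset.nonempty_iff_ne_empty.mpr hBne
      have hvS : v ∈ S := fact3 P hPc heb B hB.1 hB.2 v hv
      have : (⟨v, hvS⟩ : S) ∈ subT S B := mem_subT.mpr hv
      rw [hBe] at this
      exact absurd this (Finset.notMem_empty _)
    · intro v
      obtain ⟨B, ⟨hBP, hvB⟩, huniq⟩ := hcov v.1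
      have hBEB : B ∉ EB := by
        intro hmem
        obtain ⟨e, he, rfl⟩ := Finset.mem_image.mp hmem
        exact v.2 e he (mem_eb.mp hvB)
      refine ⟨subT S B, ⟨Finset.mem_image_of_mem _ (Finset.mem_sdiff.mpr ⟨hBP, hBEB⟩),
        mem_subT.mpr hvB⟩, ?_⟩
      rintro C'' ⟨hC''m, hvC''⟩
      obtain ⟨C, hC, rfl⟩ := Finset.mem_image.mp hC''m
      rw [Finset.mem_sdiff] at hC
      have : C = B := huniq C ⟨hC.1, mem_subT.mp hvC''⟩
      rw [this]
    · intro B'' hB''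
      obtain ⟨B, hB, rfl⟩ := Finset.mem_image.mp hB''
      rw [Finset.mem_sdiff] at hB
      rw [connected_lift, subT_image_val (fact3 P hPc heb B hB.1 hB.2)]
      exact hconn B hB.1
  · intro P' hP'
    obtain ⟨⟨hne', hcov'⟩, hconn'⟩ := mem_connParts.mp hP'
    rw [Finset.mem_filter, mem_connParts]
    refine ⟨⟨⟨?_, ?_⟩, ?_⟩, ?_⟩
    · intro hmem
      rcases Finset.mem_union.mp hmem with h | h
      · obtain ⟨B', hB', hBe⟩ := Finset.mem_image.mp h
        exact hne' (by rwa [Finset.image_eq_empty.mp hBe] at hB')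
      · obtain ⟨e, he, hee⟩ := Finset.mem_image.mp h
        have : e.out.1 ∈ eb e := mem_eb.mpr (Sym2.out_fst_mem e)
        rw [hee] at this
        exact absurd this (Finset.notMem_empty _)
    · intro v
      by_cases hv : v ∈ S
      · obtain ⟨B', ⟨hB'P, hvB'⟩, huniq'⟩ := hcov' ⟨v, hv⟩
        refine ⟨B'.image Subtype.val,
          ⟨Finset.mem_union_left _ (Finset.mem_image_of_mem _ hB'P),
            Finset.mem_image.mpr ⟨⟨v, hv⟩, hvB', rfl⟩⟩, ?_⟩
        rintro C ⟨hCm, hvC⟩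
        rcases Finset.mem_union.mp hCm with h | h
        · obtain ⟨C', hC', rfl⟩ := Finset.mem_image.mp h
          obtain ⟨b, hb, hbe⟩ := Finset.mem_image.mp hvC
          have hbsub : b = ⟨v, hv⟩ := Subtype.ext hbe
          rw [hbsub] at hb
          rw [huniq' C' ⟨hC', hb⟩]
        · obtain ⟨e, he, rfl⟩ := Finset.mem_image.mp h
          exact absurd (mem_eb.mp hvC) (hv e he)
      · rw [hmemS] at hv
        push_neg at hv
        obtain ⟨e, he, hve⟩ := hv
        refine ⟨eb e, ⟨Finset.mem_union_right _ (Finset.mem_image_of_mem _ he),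
          mem_eb.mpr hve⟩, ?_⟩
        rintro C ⟨hCm, hvC⟩
        rcases Finset.mem_union.mp hCm with h | h
        · obtain ⟨C', hC', rfl⟩ := Finset.mem_image.mp h
          obtain ⟨b, hb, hbe⟩ := Finset.mem_image.mp hvC
          exact absurd hve ((hbe ▸ b.2) e he)
        · obtain ⟨f, hf, rfl⟩ := Finset.mem_image.mp h
          rcases eq_or_ne f e with rfl | hfe
          · rfl
          · exact absurd (mem_eb.mp hvC) (hImatch e he f hf hfe.symm v hve)
    · intro B hB
      rcases Finset.mem_union.mp hB with h | h
      · obtain ⟨B', hB', rfl⟩ := Finset.mem_image.mp h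
        exact connected_lift.mp (hconn' B' hB')
      · obtain ⟨e, he, rfl⟩ := Finset.mem_image.mp h
        exact eb_connected (hIE e he)
    · exact fun e he => Finset.mem_union_right _ (Finset.mem_image_of_mem _ he)
  · intro P hP
    rw [Finset.mem_filter] at hP
    obtain ⟨hPc, heb⟩ := hP
    have key : ∀ B ∈ P \ EB, ((subT S B).image Subtype.val) = B := by
      intro B hB
      rw [Finset.mem_sdiff] at hB
      exact subT_image_val (fact3 P hPc heb B hB.1 hB.2)
    beta_reduce
    rw [Finset.image_image]
    have : Finset.image (Finset.image Subtype.val ∘ subT S) (P \ EB)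
        = P \ EB :=
      (Finset.image_congr (g := id) (fun B hB => key B hB)).trans Finset.image_id
    rw [this, Finset.sdiff_union_of_subset (factsub P heb)]
  · intro P' hP'
    have hdisj : ∀ B' ∈ P', B'.image Subtype.val ∉ EB := by
      intro B' hB' hmem
      obtain ⟨e, he, hee⟩ := Finset.mem_image.mp hmem
      have hu : e.out.1 ∈ eb e := mem_eb.mpr (Sym2.out_fst_mem e)
      rw [hee] at hu
      obtain ⟨b, hb, hbe⟩ := Finset.mem_image.mp hu
      exact (hbe ▸ b.2) e he (Sym2.out_fst_mem e)
    have hsd : (P'.image (Finset.image Subtype.val) ∪ EB) \ EB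
        = P'.image (Finset.image Subtype.val) := by
      rw [Finset.union_sdiff_right]
      rw [Finset.sdiff_eq_self_iff_disjoint]
      rw [Finset.disjoint_left]
      intro B hBm hBEB
      obtain ⟨B', hB', rfl⟩ := Finset.mem_image.mp hBm
      exact hdisj B' hB' hBEB
    beta_reduce
    rw [hsd, Finset.image_image]
    have : Finset.image (subT S ∘ Finset.image Subtype.val) P' = P' :=
      (Finset.image_congr (g := id) (fun B' hB' => image_val_subT B')).trans Finset.image_id
    rw [this]
  · intro P hP
    rw [Finset.mem_filter] at hP
    obtain ⟨hPc, heb⟩ := hP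
    have hinj : Set.InjOn (subT S) (P \ EB : Finset (Finset V)) := by
      intro B₁ h₁ B₂ h₂ h
      rw [Finset.mem_coe, Finset.mem_sdiff] at h₁ h₂
      have e₁ := subT_image_val (fact3 P hPc heb B₁ h₁.1 h₁.2)
      have e₂ := subT_image_val (fact3 P hPc heb B₂ h₂.1 h₂.2)
      rw [← e₁, ← e₂, h]
    have hcard1 : (Finset.image (subT S) (P \ EB)).card = (P \ EB).card :=
      Finset.card_image_of_injOn hinj
    have hcard2 : EB.card = I.card := Finset.card_image_of_injOn (eb_injOn hImatch)
    have hcard3 : (P \ EB).card = P.card - EB.card := Finset.card_sdiff_of_subset (factsub P heb)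
    have hle : EB.card ≤ P.card := Finset.card_le_card (factsub P heb)
    rw [← pow_add]
    congr 1
    rw [hcard1, hcard3, hcard2]
    omega

/-- Matching extraction: if `M` is a matching of `G` whose edges have both endpoints
adjacent to every other vertex, then `Q(G-M,x) = Σ_{I⊆M} (-x)^{|I|} Q(G†I,x)`,
where `G†I` deletes both endpoints of every edge of `I`. -/
theorem matching_extraction (G : SimpleGraph V) (M : Finset (Sym2 V))
    (hME : (M : Set (Sym2 V)) ⊆ G.edgeSet)
    (hmatch : ∀ e ∈ M, ∀ f ∈ M, e ≠ f → ∀ v : V, v ∈ e → v ∉ f)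
    (hdom : ∀ e ∈ M, ∀ u : V, u ∈ e → ∀ w : V, w ∉ e → G.Adj u w) (x : ℤ) :
    Q (G.deleteEdges (M : Set (Sym2 V))) x
      = ∑ I ∈ M.powerset,
          (-x) ^ I.card * Q (G.induce {v : V | ∀ e ∈ I, v ∉ e}) x := by
  rw [Q, connParts_del G M hME hmatch hdom, sum_filter]
  have step1 : ∀ P ∈ connParts G,
      (if ∀ e ∈ M, eb e ∉ P then x ^ P.card else 0)
        = ∑ I ∈ M.powerset,
            (if ∀ e ∈ I, eb e ∈ P then ((-1 : ℤ) ^ I.card) * x ^ P.card else 0) := by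
    intro P hP
    have hpow : (M.filter (fun e => eb e ∈ P)).powerset
        = M.powerset.filter (fun I => ∀ e ∈ I, eb e ∈ P) := by
      ext J
      simp only [Finset.mem_powerset, Finset.mem_filter, Finset.subset_iff, Finset.mem_filter]
      constructor
      · intro h
        exact ⟨fun a ha => (h ha).1, fun e he => (h he).2⟩
      · intro h a ha
        exact ⟨h.1 ha, h.2 a ha⟩
    have h1 : (∑ I ∈ (M.filter (fun e => eb e ∈ P)).powerset, (-1 : ℤ) ^ I.card)
        = if M.filter (fun e => eb e ∈ P) = ∅ then 1 else 0 :=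
      Finset.sum_powerset_neg_one_pow_card
    rw [hpow, sum_filter] at h1
    have h2 : (M.filter (fun e => eb e ∈ P) = ∅) ↔ (∀ e ∈ M, eb e ∉ P) := by
      rw [Finset.filter_eq_empty_iff]
    calc (if ∀ e ∈ M, eb e ∉ P then x ^ P.card else 0)
        = (if M.filter (fun e => eb e ∈ P) = ∅ then (1:ℤ) else 0) * x ^ P.card := by
          by_cases h : ∀ e ∈ M, eb e ∉ P
          · rw [if_pos h, if_pos (h2.mpr h), one_mul]
          · rw [if_neg h, if_neg (fun hc => h (h2.mp hc)), zero_mul]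
      _ = (∑ I ∈ M.powerset, if ∀ e ∈ I, eb e ∈ P then (-1 : ℤ) ^ I.card else 0) * x ^ P.card := by
          rw [← h1]
      _ = _ := by
          rw [Finset.sum_mul]
          exact Finset.sum_congr rfl fun I hI => by
            split_ifs <;> simp
  rw [Finset.sum_congr rfl step1, Finset.sum_comm]
  refine Finset.sum_congr rfl fun I hI => ?_
  have hIM : I ⊆ M := Finset.mem_powerset.mp hI
  have hIE : ∀ e ∈ I, e ∈ G.edgeSet := fun e he => hME (hIM he)
  have hImatch : ∀ e ∈ I, ∀ f ∈ I, e ≠ f → ∀ v : V, v ∈ e → v ∉ f :=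
    fun e he f hf => hmatch e (hIM he) f (hIM hf)
  calc (∑ P ∈ connParts G, if ∀ e ∈ I, eb e ∈ P then ((-1 : ℤ) ^ I.card) * x ^ P.card else 0)
      = (-1 : ℤ) ^ I.card
          * ∑ P ∈ (connParts G).filter (fun P => ∀ e ∈ I, eb e ∈ P), x ^ P.card := by
        rw [← sum_filter, Finset.mul_sum]
    _ = (-1 : ℤ) ^ I.card * (x ^ I.card * Q (G.induce {v : V | ∀ e ∈ I, v ∉ e}) x) := by
        rw [sum_filter_eb G I hIE hImatch x]
    _ = (-x) ^ I.card * Q (G.induce {v : V | ∀ e ∈ I, v ∉ e}) x := by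
        rw [neg_pow x, mul_assoc]
end

section
/- Let n, m be nonnegative integers with 2m ≤ n, and let M_m be a matching with exactly m edges in the complete graph K_n. Then Q(K_n − M_m, x) = Σ_{i=0}^{m} Σ_{j=0}^{n−2i} C(m,i)·(−1)^i·S(n−2i, j)·x^{i+j}, where K_n − M_m is the graph obtained from K_n by deleting the m matching edges, C(a,b) is the binomial coefficient and S(a,b) is the Stirling number of the second kind. -/
set_option linter.unusedSectionVars false

open Finset

variable {V : Type*} [Fintype V] [DecidableEq V]

open scoped Classical in
/-- The Stirling number of the second kind `S(a,b)`: the number of set partitions of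
an `a`-element set into exactly `b` blocks (so `S(0,0) = 1`). -/
noncomputable def stirlingSnd (a b : ℕ) : ℕ :=
  (Finset.univ.filter
    (fun P : Finset (Finset (Fin a)) => IsPartition P ∧ P.card = b)).card

/-! ### Auxiliary lemmas -/

lemma IsPartition.block_eq {P : Finset (Finset V)} (hP : IsPartition P)
    {B C : Finset V} (hB : B ∈ P) (hC : C ∈ P) {v : V} (hvB : v ∈ B) (hvC : v ∈ C) :
    B = C :=
  ((hP.2 v).unique ⟨hB, hvB⟩ ⟨hC, hvC⟩)

/-- A partition of the subset `T` of the vertex set. -/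
def IsPartitionOn (T : Finset V) (P : Finset (Finset V)) : Prop :=
  ∅ ∉ P ∧ (∀ B ∈ P, B ⊆ T) ∧ ∀ v ∈ T, ∃! B : Finset V, B ∈ P ∧ v ∈ B

lemma IsPartitionOn.block_eq {T : Finset V} {P : Finset (Finset V)} (hP : IsPartitionOn T P)
    {B C : Finset V} (hB : B ∈ P) (hC : C ∈ P) {v : V} (hvB : v ∈ B) (hvC : v ∈ C) :
    B = C :=
  ((hP.2.2 v (hP.2.1 B hB hvB)).unique ⟨hB, hvB⟩ ⟨hC, hvC⟩)

lemma IsPartitionOn.card_le {T : Finset V} {P : Finset (Finset V)}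
    (hP : IsPartitionOn T P) : P.card ≤ T.card := by
  have hdisj : ∀ B ∈ P, ∀ C ∈ P, B ≠ C → Disjoint B C := by
    intro B hB C hC hne
    rw [Finset.disjoint_left]
    intro v hvB hvC
    exact hne (hP.block_eq hB hC hvB hvC)
  have h1 : (P.biUnion id).card = ∑ B ∈ P, B.card := Finset.card_biUnion hdisj
  have h2 : P.biUnion id ⊆ T := by
    intro v hv
    obtain ⟨B, hB, hvB⟩ := Finset.mem_biUnion.1 hv
    exact hP.2.1 B hB hvB
  calc P.card = ∑ _B ∈ P, 1 := by simp
    _ ≤ ∑ B ∈ P, B.card := by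
        refine Finset.sum_le_sum fun B hB => ?_
        have : B ≠ ∅ := fun h => hP.1 (h ▸ hB)
        exact Nat.one_le_iff_ne_zero.2 (by simpa [Finset.card_eq_zero] using this)
    _ = (P.biUnion id).card := h1.symm
    _ ≤ T.card := Finset.card_le_card h2

/-- Transport of partitions along an equivalence of types. -/
lemma IsPartition.image_equiv {α β : Type*} [Fintype α] [DecidableEq α] [Fintype β]
    [DecidableEq β] (e : α ≃ β) {P : Finset (Finset α)} (hP : IsPartition P) :
    IsPartition (P.image (Finset.image e)) := by
  constructor
  · intro h
    obtain ⟨B, hB, hBe⟩ := Finset.mem_image.1 h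
    rw [Finset.image_eq_empty] at hBe
    exact hP.1 (hBe ▸ hB)
  · intro w
    obtain ⟨B, ⟨hB, hv⟩, hu⟩ := hP.2 (e.symm w)
    refine ⟨B.image e, ⟨Finset.mem_image_of_mem _ hB, ?_⟩, ?_⟩
    · exact Finset.mem_image.2 ⟨e.symm w, hv, e.apply_symm_apply w⟩
    · rintro C ⟨hC, hwC⟩
      obtain ⟨B', hB', rfl⟩ := Finset.mem_image.1 hC
      obtain ⟨u, hu', hue⟩ := Finset.mem_image.1 hwC
      have : u = e.symm w := by rw [← hue]; simp
      subst this
      rw [hu B' ⟨hB', hu'⟩]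

open scoped Classical in
lemma nparts_equiv {α β : Type*} [Fintype α] [DecidableEq α] [Fintype β] [DecidableEq β]
    (e : α ≃ β) (k : ℕ) :
    (Finset.univ.filter (fun P : Finset (Finset α) => IsPartition P ∧ P.card = k)).card
      = (Finset.univ.filter (fun P : Finset (Finset β) => IsPartition P ∧ P.card = k)).card := by
  have key : ∀ (P : Finset (Finset α)), (P.image (Finset.image e)).image (Finset.image e.symm) = P := by
    intro P
    rw [Finset.image_image]
    have h : (Finset.image e.symm ∘ Finset.image e) = id := by
      funext B; simp [Finset.image_image]
    rw [h, Finset.image_id]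
  have key' : ∀ (P : Finset (Finset β)), (P.image (Finset.image e.symm)).image (Finset.image e) = P := by
    intro P
    rw [Finset.image_image]
    have h : (Finset.image e ∘ Finset.image e.symm) = id := by
      funext B; simp [Finset.image_image]
    rw [h, Finset.image_id]
  have hcard : ∀ (P : Finset (Finset α)), (P.image (Finset.image e)).card = P.card := by
    intro P
    apply Finset.card_image_of_injective
    exact Finset.image_injective e.injective
  refine Finset.card_nbij' (fun P => P.image (Finset.image e))
    (fun P => P.image (Finset.image e.symm)) ?_ ?_ ?_ ?_
  · intro P hP
    simp only [Finset.mem_coe, Finset.mem_filter, Finset.mem_univ, true_and] at hP ⊢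
    exact ⟨hP.1.image_equiv e, by rw [hcard]; exact hP.2⟩
  · intro P hP
    simp only [Finset.mem_coe, Finset.mem_filter, Finset.mem_univ, true_and] at hP ⊢
    constructor
    · exact hP.1.image_equiv e.symm
    · rw [show (P.image (Finset.image e.symm)).card = P.card from
        Finset.card_image_of_injective _ (Finset.image_injective e.symm.injective)]
      exact hP.2
  · intro P _; exact key P
  · intro P _; exact key' P

open scoped Classical in
/-- The number of partitions of `T ⊆ V` into `k` blocks is the Stirling number. -/
lemma card_isPartitionOn (T : Finset V) (k : ℕ) :
    (Finset.univ.filter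
      (fun P : Finset (Finset V) => IsPartitionOn T P ∧ P.card = k)).card
      = stirlingSnd T.card k := by
  have step1 :
      (Finset.univ.filter
        (fun P : Finset (Finset V) => IsPartitionOn T P ∧ P.card = k)).card
      = (Finset.univ.filter
        (fun P : Finset (Finset {x // x ∈ T}) => IsPartition P ∧ P.card = k)).card := by
    have emb := Function.Embedding.subtype (fun x => x ∈ T)
    have hback : ∀ B : Finset V, B ⊆ T →
        (B.subtype (· ∈ T)).map (Function.Embedding.subtype _) = B := by
      intro B hB
      rw [Finset.subtype_map]
      exact Finset.filter_true_of_mem hB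
    have hfwd : ∀ C : Finset {x // x ∈ T},
        (C.map (Function.Embedding.subtype _)).subtype (· ∈ T) = C := by
      intro C
      ext x
      simp only [Finset.mem_subtype, Finset.mem_map, Function.Embedding.coe_subtype]
      constructor
      · rintro ⟨y, hy, hyx⟩
        rwa [show y = x from Subtype.ext hyx] at hy
      · intro hx; exact ⟨x, hx, rfl⟩
    refine Finset.card_nbij' (fun P => P.image (fun B => B.subtype (· ∈ T)))
      (fun Q => Q.image (fun B => B.map (Function.Embedding.subtype _))) ?_ ?_ ?_ ?_
    · intro P hP
      simp only [Finset.mem_coe, Finset.mem_filter, Finset.mem_univ, true_and] at hP ⊢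
      obtain ⟨⟨hemp, hsub, hex⟩, hcard⟩ := hP
      refine ⟨⟨?_, ?_⟩, ?_⟩
      · intro h
        obtain ⟨B, hB, hBe⟩ := Finset.mem_image.1 h
        have : B = ∅ := by
          rw [← hback B (hsub B hB), hBe, Finset.map_empty]
        exact hemp (this ▸ hB)
      · rintro ⟨v, hv⟩
        obtain ⟨B, ⟨hB, hvB⟩, hu⟩ := hex v hv
        refine ⟨B.subtype (· ∈ T), ⟨Finset.mem_image_of_mem _ hB, ?_⟩, ?_⟩
        · simpa [Finset.mem_subtype] using hvB
        · rintro C ⟨hC, hvC⟩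
          obtain ⟨B', hB', rfl⟩ := Finset.mem_image.1 hC
          rw [Finset.mem_subtype] at hvC
          rw [hu B' ⟨hB', hvC⟩]
      · rw [← hcard]
        apply Finset.card_image_of_injOn
        intro B hB B' hB' hyp
        simp only at hyp
        rw [← hback B (hsub B hB), ← hback B' (hsub B' hB'), hyp]
    · intro Q hQ
      simp only [Finset.mem_coe, Finset.mem_filter, Finset.mem_univ, true_and] at hQ ⊢
      obtain ⟨⟨hemp, hex⟩, hcard⟩ := hQ
      refine ⟨⟨?_, ?_, ?_⟩, ?_⟩
      · intro h
        obtain ⟨B, hB, hBe⟩ := Finset.mem_image.1 h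
        rw [Finset.map_eq_empty] at hBe
        exact hemp (hBe ▸ hB)
      · intro B hB v hv
        obtain ⟨B', _, rfl⟩ := Finset.mem_image.1 hB
        obtain ⟨y, _, rfl⟩ := Finset.mem_map.1 hv
        exact y.2
      · intro v hv
        obtain ⟨B, ⟨hB, hvB⟩, hu⟩ := hex ⟨v, hv⟩
        refine ⟨B.map (Function.Embedding.subtype _), ⟨Finset.mem_image_of_mem _ hB, ?_⟩, ?_⟩
        · exact Finset.mem_map.2 ⟨⟨v, hv⟩, hvB, rfl⟩
        · rintro C ⟨hC, hvC⟩
          obtain ⟨B', hB', rfl⟩ := Finset.mem_image.1 hC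
          obtain ⟨y, hy, hyv⟩ := Finset.mem_map.1 hvC
          have : y = ⟨v, hv⟩ := Subtype.ext hyv
          subst this
          rw [hu B' ⟨hB', hy⟩]
      · rw [← hcard]
        apply Finset.card_image_of_injective
        exact fun B B' h => Finset.map_injective _ h
    · intro P hP
      simp only [Finset.mem_coe, Finset.mem_filter, Finset.mem_univ, true_and] at hP
      simp only
      rw [Finset.image_image]
      have : ∀ B ∈ P, (Finset.map (Function.Embedding.subtype _) ∘
          (fun B : Finset V => B.subtype (· ∈ T))) B = id B := by
        intro B hB
        exact hback B (hP.1.2.1 B hB)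
      rw [Finset.image_congr this, Finset.image_id]
    · intro Q hQ
      simp only
      rw [Finset.image_image]
      have : ∀ B ∈ Q, ((fun B : Finset V => B.subtype (· ∈ T)) ∘
          Finset.map (Function.Embedding.subtype _)) B = id B := by
        intro B _
        exact hfwd B
      rw [Finset.image_congr this, Finset.image_id]
  rw [step1]
  rw [nparts_equiv (Fintype.equivFinOfCardEq (Fintype.card_coe T)) k]
  rfl

section Main

variable {n : ℕ} (M : Finset (Sym2 (Fin n)))

/-- The pair of endpoints of `e` as a finset. -/
noncomputable def pairF (e : Sym2 (Fin n)) : Finset (Fin n) :=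
  Finset.univ.filter (· ∈ e)

lemma mem_pairF {e : Sym2 (Fin n)} {v : Fin n} : v ∈ pairF e ↔ v ∈ e := by
  simp [pairF]

lemma pairF_nonempty (e : Sym2 (Fin n)) : (pairF e).Nonempty := by
  induction e using Sym2.inductionOn with
  | hf a b => exact ⟨a, mem_pairF.2 (Sym2.mem_mk_left a b)⟩

lemma pairF_card {e : Sym2 (Fin n)} (he : ¬ e.IsDiag) : (pairF e).card = 2 := by
  induction e using Sym2.inductionOn with
  | hf a b =>
      have hab : a ≠ b := by simpa [Sym2.mk_isDiag_iff] using he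
      have : pairF s(a, b) = {a, b} := by
        ext v; simp [mem_pairF, Sym2.mem_iff]
      rw [this, Finset.card_insert_of_notMem (by simpa using hab), Finset.card_singleton]

/-- Characterization of connectivity of induced subgraphs of `K_n` minus a matching:
a nonempty block is connected iff it is not one of the deleted matching edges. -/
lemma conn_char (hME : (M : Set (Sym2 (Fin n))) ⊆ (⊤ : SimpleGraph (Fin n)).edgeSet)
    (hmatch : ∀ e ∈ M, ∀ f ∈ M, e ≠ f → ∀ v : Fin n, v ∈ e → v ∉ f)
    {B : Finset (Fin n)} (hB : B.Nonempty) :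
    (((⊤ : SimpleGraph (Fin n)).deleteEdges (M : Set (Sym2 (Fin n)))).induce
      (B : Set (Fin n))).Connected ↔ ∀ e ∈ M, pairF e ≠ B := by
  set G := (⊤ : SimpleGraph (Fin n)).deleteEdges (M : Set (Sym2 (Fin n))) with hG
  have hGadj : ∀ u v : Fin n, G.Adj u v ↔ u ≠ v ∧ s(u, v) ∉ M := by
    intro u v
    rw [hG, SimpleGraph.deleteEdges_adj, SimpleGraph.top_adj]
    simp
  constructor
  · intro hconn e heM hpe
    -- B is a matching edge: induced graph has no edges, but two vertices
    have hediag : ¬ e.IsDiag := by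
      have := hME heM
      rwa [SimpleGraph.edgeSet_top, Set.mem_compl_iff, Sym2.mem_diagSet] at this
    induction e using Sym2.inductionOn with
    | hf a b =>
        have hab : a ≠ b := by simpa [Sym2.mk_isDiag_iff] using hediag
        have ha : a ∈ B := hpe ▸ mem_pairF.2 (Sym2.mem_mk_left a b)
        have hb : b ∈ B := hpe ▸ mem_pairF.2 (Sym2.mem_mk_right a b)
        have hbot : (G.induce (B : Set (Fin n))) = ⊥ := by
          ext ⟨u, hu⟩ ⟨v, hv⟩
          simp only [SimpleGraph.comap_adj, Function.Embedding.coe_subtype,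
            SimpleGraph.bot_adj, iff_false]
          intro hadj
          rw [hGadj] at hadj
          have hu' : u = a ∨ u = b := by
            have : u ∈ pairF s(a, b) := hpe ▸ hu
            simpa [mem_pairF, Sym2.mem_iff] using this
          have hv' : v = a ∨ v = b := by
            have : v ∈ pairF s(a, b) := hpe ▸ hv
            simpa [mem_pairF, Sym2.mem_iff] using this
          apply hadj.2
          rcases hu' with rfl | rfl <;> rcases hv' with rfl | rfl
          · exact absurd rfl hadj.1
          · exact heM
          · rw [Sym2.eq_swap]; exact heM
          · exact absurd rfl hadj.1
        have hreach := hconn.preconnected ⟨a, ha⟩ ⟨b, hb⟩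
        rw [hbot, SimpleGraph.reachable_bot] at hreach
        exact hab (by simpa using hreach)
  · intro h
    have hadj' : ∀ u v : Fin n, ∀ hu : u ∈ B, ∀ hv : v ∈ B, u ≠ v → s(u, v) ∉ M →
        (G.induce (B : Set (Fin n))).Adj ⟨u, hu⟩ ⟨v, hv⟩ := by
      intro u v hu hv hne hnM
      simp only [SimpleGraph.comap_adj, Function.Embedding.coe_subtype]
      exact (hGadj u v).2 ⟨hne, hnM⟩
    haveI : Nonempty (B : Set (Fin n)) := by
      obtain ⟨v0, hv0⟩ := hB
      exact ⟨⟨v0, hv0⟩⟩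
    refine SimpleGraph.Connected.mk ?_
    · rintro ⟨u, hu⟩ ⟨v, hv⟩
      rw [Finset.mem_coe] at hu hv
      by_cases huv : u = v
      · subst huv; rfl
      by_cases hM : s(u, v) ∈ M
      · -- go through a third vertex
        have hsub : pairF s(u, v) ⊆ B := by
          intro w hw
          rcases (Sym2.mem_iff).1 (mem_pairF.1 hw) with rfl | rfl
          exacts [hu, hv]
        have hss : pairF s(u, v) ⊂ B := hsub.ssubset_of_ne (h _ hM)
        obtain ⟨z, hzB, hz⟩ := Finset.exists_of_ssubset hss
        have hzu : z ≠ u := fun hzu =>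
          hz (mem_pairF.2 (by rw [hzu]; exact Sym2.mem_mk_left u v))
        have hzv : z ≠ v := fun hzv =>
          hz (mem_pairF.2 (by rw [hzv]; exact Sym2.mem_mk_right u v))
        have h1 : s(u, z) ∉ M := by
          intro hm
          have hne : s(u, z) ≠ s(u, v) := fun hh => hzv (Sym2.congr_right.1 hh)
          exact hmatch _ hM _ hm (Ne.symm hne) u (Sym2.mem_mk_left u v)
            (Sym2.mem_mk_left u z)
        have h2 : s(z, v) ∉ M := by
          intro hm
          have hne : s(z, v) ≠ s(u, v) := fun hh => hzu (Sym2.congr_left.1 hh)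
          exact hmatch _ hM _ hm (Ne.symm hne) v (Sym2.mem_mk_right u v)
            (Sym2.mem_mk_right z v)
        exact ((hadj' u z hu hzB hzu.symm h1).reachable).trans
          ((hadj' z v hzB hv hzv h2).reachable)
      · exact (hadj' u v hu hv huv hM).reachable

open scoped Classical in
lemma connParts_eq (hME : (M : Set (Sym2 (Fin n))) ⊆ (⊤ : SimpleGraph (Fin n)).edgeSet)
    (hmatch : ∀ e ∈ M, ∀ f ∈ M, e ≠ f → ∀ v : Fin n, v ∈ e → v ∉ f) :
    connParts ((⊤ : SimpleGraph (Fin n)).deleteEdges (M : Set (Sym2 (Fin n))))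
      = Finset.univ.filter
          (fun P : Finset (Finset (Fin n)) => IsPartition P ∧ ∀ e ∈ M, pairF e ∉ P) := by
  ext P
  simp only [connParts, Finset.mem_filter, Finset.mem_univ, true_and, IsConnPartition]
  constructor
  · rintro ⟨hP, hconn⟩
    refine ⟨hP, fun e he hmem => ?_⟩
    exact (conn_char M hME hmatch (pairF_nonempty e)).1 (hconn _ hmem) e he rfl
  · rintro ⟨hP, hforb⟩
    refine ⟨hP, fun B hB => ?_⟩
    have hBne : B.Nonempty := Finset.nonempty_iff_ne_empty.2 (fun h => hP.1 (h ▸ hB))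
    exact (conn_char M hME hmatch hBne).2 (fun e he hpe => hforb e he (hpe ▸ hB))

lemma myProdIteZero {ι : Type*} (S : Finset ι) (p : ι → Prop) [DecidablePred p] :
    (∏ e ∈ S, if p e then (0 : ℤ) else 1) = if ∀ e ∈ S, ¬ p e then 1 else 0 := by
  by_cases h : ∀ e ∈ S, ¬ p e
  · rw [if_pos h, Finset.prod_congr rfl (fun e he => if_neg (h e he)), Finset.prod_const_one]
  · push_neg at h
    obtain ⟨e, he, hpe⟩ := h
    rw [if_neg (by push_neg; exact ⟨e, he, hpe⟩)]
    exact Finset.prod_eq_zero he (if_pos hpe)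

lemma myProdIteOne {ι : Type*} (S : Finset ι) (p : ι → Prop) [DecidablePred p] :
    (∏ e ∈ S, if p e then (1 : ℤ) else 0) = if ∀ e ∈ S, p e then 1 else 0 := by
  by_cases h : ∀ e ∈ S, p e
  · rw [if_pos h, Finset.prod_congr rfl (fun e he => if_pos (h e he)), Finset.prod_const_one]
  · push_neg at h
    obtain ⟨e, he, hpe⟩ := h
    rw [if_neg (by push_neg; exact ⟨e, he, hpe⟩)]
    exact Finset.prod_eq_zero he (if_neg hpe)

open scoped Classical in
lemma sum_parts_containing (hME : (M : Set (Sym2 (Fin n))) ⊆ (⊤ : SimpleGraph (Fin n)).edgeSet)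
    (hmatch : ∀ e ∈ M, ∀ f ∈ M, e ≠ f → ∀ v : Fin n, v ∈ e → v ∉ f)
    (S : Finset (Sym2 (Fin n))) (hS : S ⊆ M) (x : ℤ) :
    ∑ P ∈ Finset.univ.filter
        (fun P : Finset (Finset (Fin n)) => IsPartition P ∧ ∀ e ∈ S, pairF e ∈ P),
      x ^ P.card
    = ∑ j ∈ Finset.range (n - 2 * S.card + 1),
        (stirlingSnd (n - 2 * S.card) j : ℤ) * x ^ (S.card + j) := by
  set D : Finset (Finset (Fin n)) := S.image pairF with hD
  set U : Finset (Fin n) := S.biUnion pairF with hU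
  set T : Finset (Fin n) := Finset.univ \ U with hT
  have hnd : ∀ e ∈ S, ¬ e.IsDiag := by
    intro e he
    have := hME (hS he)
    rwa [SimpleGraph.edgeSet_top, Set.mem_compl_iff, Sym2.mem_diagSet] at this
  have hpdisj : ∀ e ∈ S, ∀ f ∈ S, e ≠ f → Disjoint (pairF e) (pairF f) := by
    intro e he f hf hef
    rw [Finset.disjoint_left]
    intro v hv hvf
    exact hmatch e (hS he) f (hS hf) hef v (mem_pairF.1 hv) (mem_pairF.1 hvf)
  have hUcard : U.card = 2 * S.card := by
    rw [hU, Finset.card_biUnion hpdisj]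
    rw [Finset.sum_congr rfl (fun e he => pairF_card (hnd e he)), Finset.sum_const,
      smul_eq_mul, mul_comm]
  have hTcard : T.card = n - 2 * S.card := by
    rw [hT, Finset.card_sdiff_of_subset (Finset.subset_univ U), Finset.card_univ, Fintype.card_fin,
      hUcard]
  have hDcard : D.card = S.card := by
    rw [hD]
    apply Finset.card_image_of_injOn
    intro e he f hf hef
    by_contra hne
    obtain ⟨v, hv⟩ := pairF_nonempty e
    have hvf : v ∈ pairF f := hef ▸ hv
    exact hmatch e (hS he) f (hS hf) hne v (mem_pairF.1 hv) (mem_pairF.1 hvf)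
  have hDU : ∀ B ∈ D, B ⊆ U := by
    rintro B hB
    obtain ⟨e, he, rfl⟩ := Finset.mem_image.1 hB
    exact Finset.subset_biUnion_of_mem pairF he
  have hDne : ∀ B ∈ D, B.Nonempty := by
    rintro B hB
    obtain ⟨e, _, rfl⟩ := Finset.mem_image.1 hB
    exact pairF_nonempty e
  have hDeq : ∀ P : Finset (Finset (Fin n)), (∀ e ∈ S, pairF e ∈ P) ↔ D ⊆ P := by
    intro P
    constructor
    · intro h B hB
      obtain ⟨e, he, rfl⟩ := Finset.mem_image.1 hB
      exact h e he
    · intro h e he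
      exact h (Finset.mem_image_of_mem pairF he)
  -- Step 1: bijection with partitions of `T`
  have step1 :
      ∑ P ∈ Finset.univ.filter
          (fun P : Finset (Finset (Fin n)) => IsPartition P ∧ ∀ e ∈ S, pairF e ∈ P),
        x ^ P.card
      = ∑ P' ∈ Finset.univ.filter (fun P' : Finset (Finset (Fin n)) => IsPartitionOn T P'),
          x ^ (S.card + P'.card) := by
    refine Finset.sum_nbij' (fun P => P \ D) (fun P' => P' ∪ D) ?_ ?_ ?_ ?_ ?_
    · intro P hP
      simp only [Finset.mem_filter, Finset.mem_univ, true_and] at hP ⊢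
      obtain ⟨hPart, hcont⟩ := hP
      rw [hDeq] at hcont
      refine ⟨fun h => hPart.1 (Finset.mem_sdiff.1 h).1, ?_, ?_⟩
      · intro B hB v hvB
        rw [Finset.mem_sdiff] at hB
        rw [hT, Finset.mem_sdiff]
        refine ⟨Finset.mem_univ v, fun hvU => ?_⟩
        obtain ⟨e, he, hve⟩ := Finset.mem_biUnion.1 hvU
        have : B = pairF e := hPart.block_eq hB.1 (hcont (Finset.mem_image_of_mem pairF he))
          hvB hve
        exact hB.2 (this ▸ Finset.mem_image_of_mem pairF he)
      · intro v hv
        obtain ⟨B, ⟨hB, hvB⟩, hu⟩ := hPart.2 v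
        have hBD : B ∉ D := by
          intro hBD
          obtain ⟨e, he, rfl⟩ := Finset.mem_image.1 hBD
          rw [hT, Finset.mem_sdiff] at hv
          exact hv.2 (Finset.mem_biUnion.2 ⟨e, he, hvB⟩)
        refine ⟨B, ⟨Finset.mem_sdiff.2 ⟨hB, hBD⟩, hvB⟩, ?_⟩
        rintro C ⟨hC, hvC⟩
        exact hu C ⟨(Finset.mem_sdiff.1 hC).1, hvC⟩
    · intro P' hP'
      simp only [Finset.mem_filter, Finset.mem_univ, true_and] at hP' ⊢
      rw [hDeq]
      have hsub : ∀ B ∈ P', B ⊆ T := hP'.2.1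
      refine ⟨⟨?_, ?_⟩, fun B hB => Finset.mem_union_right _ hB⟩
      · intro h
        rcases Finset.mem_union.1 h with h | h
        · exact hP'.1 h
        · exact Finset.not_nonempty_empty (hDne ∅ h)
      · intro v
        by_cases hvU : v ∈ U
        · obtain ⟨e, he, hve⟩ := Finset.mem_biUnion.1 hvU
          refine ⟨pairF e, ⟨Finset.mem_union_right _ (Finset.mem_image_of_mem pairF he),
            hve⟩, ?_⟩
          rintro C ⟨hC, hvC⟩
          rcases Finset.mem_union.1 hC with hC' | hC'
          · exfalso
            have := hsub C hC' hvC
            rw [hT, Finset.mem_sdiff] at this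
            exact this.2 hvU
          · obtain ⟨f, hf, rfl⟩ := Finset.mem_image.1 hC'
            by_cases hfe : f = e
            · rw [hfe]
            · exact absurd (mem_pairF.1 hve)
                (hmatch f (hS hf) e (hS he) hfe v (mem_pairF.1 hvC))
        · have hvT : v ∈ T := by rw [hT, Finset.mem_sdiff]; exact ⟨Finset.mem_univ v, hvU⟩
          obtain ⟨B, ⟨hB, hvB⟩, hu⟩ := hP'.2.2 v hvT
          refine ⟨B, ⟨Finset.mem_union_left _ hB, hvB⟩, ?_⟩
          rintro C ⟨hC, hvC⟩
          rcases Finset.mem_union.1 hC with hC' | hC'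
          · exact hu C ⟨hC', hvC⟩
          · exact absurd (hDU C hC' hvC) hvU
    · intro P hP
      simp only [Finset.mem_filter, Finset.mem_univ, true_and] at hP
      exact Finset.sdiff_union_of_subset ((hDeq P).1 hP.2)
    · intro P' hP'
      simp only [Finset.mem_filter, Finset.mem_univ, true_and] at hP'
      apply Finset.union_sdiff_cancel_right
      rw [Finset.disjoint_left]
      intro B hBP' hBD
      obtain ⟨v, hv⟩ := hDne B hBD
      have := hP'.2.1 B hBP' hv
      rw [hT, Finset.mem_sdiff] at this
      exact this.2 (hDU B hBD hv)
    · intro P hP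
      simp only [Finset.mem_filter, Finset.mem_univ, true_and] at hP
      have hDP : D ⊆ P := (hDeq P).1 hP.2
      have : (P \ D).card + D.card = P.card := Finset.card_sdiff_add_card_eq_card hDP
      rw [← this, hDcard, add_comm]
  rw [step1]
  -- Step 2: fiberwise count
  have hmaps : ∀ P' ∈ Finset.univ.filter
      (fun P' : Finset (Finset (Fin n)) => IsPartitionOn T P'),
      P'.card ∈ Finset.range (n - 2 * S.card + 1) := by
    intro P' hP'
    simp only [Finset.mem_filter, Finset.mem_univ, true_and] at hP'
    rw [Finset.mem_range, Nat.lt_succ_iff, ← hTcard]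
    exact hP'.card_le
  rw [← Finset.sum_fiberwise_of_maps_to hmaps (fun P' => x ^ (S.card + P'.card))]
  refine Finset.sum_congr rfl fun j hj => ?_
  have : ∀ P' ∈ (Finset.univ.filter
      (fun P' : Finset (Finset (Fin n)) => IsPartitionOn T P')).filter
      (fun P' => P'.card = j), x ^ (S.card + P'.card) = x ^ (S.card + j) := by
    intro P' hP'
    rw [(Finset.mem_filter.1 hP').2]
  rw [Finset.sum_congr rfl this, Finset.sum_const, nsmul_eq_mul]
  congr 1
  rw [Finset.filter_filter]
  rw [← hTcard]
  rw [← card_isPartitionOn T j]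

end Main

/-- The partition polynomial of the complete graph minus a matching of `m` edges. -/
theorem completeGraph_minus_matching (n m : ℕ) (hnm : 2 * m ≤ n)
    (M : Finset (Sym2 (Fin n))) (hcard : M.card = m)
    (hME : (M : Set (Sym2 (Fin n))) ⊆ (⊤ : SimpleGraph (Fin n)).edgeSet)
    (hmatch : ∀ e ∈ M, ∀ f ∈ M, e ≠ f → ∀ v : Fin n, v ∈ e → v ∉ f) (x : ℤ) :
    Q ((⊤ : SimpleGraph (Fin n)).deleteEdges (M : Set (Sym2 (Fin n)))) x
      = ∑ i ∈ Finset.range (m + 1), ∑ j ∈ Finset.range (n - 2 * i + 1),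
          (m.choose i : ℤ) * (-1) ^ i * (stirlingSnd (n - 2 * i) j : ℤ)
            * x ^ (i + j) := by
  classical
  rw [Q, connParts_eq M hME hmatch]
  have hsplit :
      ∑ P ∈ Finset.univ.filter
          (fun P : Finset (Finset (Fin n)) => IsPartition P ∧ ∀ e ∈ M, pairF e ∉ P),
        x ^ P.card
      = ∑ P ∈ Finset.univ.filter (fun P : Finset (Finset (Fin n)) => IsPartition P),
          if (∀ e ∈ M, pairF e ∉ P) then x ^ P.card else 0 := by
    rw [Finset.sum_filter]
    rw [Finset.sum_filter]
    refine Finset.sum_congr rfl fun P _ => ?_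
    by_cases h1 : IsPartition P <;> by_cases h2 : ∀ e ∈ M, pairF e ∉ P <;>
      simp [h1, h2]
  rw [hsplit]
  -- inclusion-exclusion on each partition
  have key : ∀ P : Finset (Finset (Fin n)),
      (if (∀ e ∈ M, pairF e ∉ P) then x ^ P.card else 0)
      = ∑ S ∈ M.powerset, (-1 : ℤ) ^ S.card *
          (if (∀ e ∈ S, pairF e ∈ P) then x ^ P.card else 0) := by
    intro P
    have hfac : ∀ e : Sym2 (Fin n),
        (-(if pairF e ∈ P then (1 : ℤ) else 0)) + 1 = (if pairF e ∈ P then 0 else 1) := by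
      intro e; by_cases h : pairF e ∈ P <;> simp [h]
    calc (if (∀ e ∈ M, pairF e ∉ P) then x ^ P.card else 0)
        = (if (∀ e ∈ M, pairF e ∉ P) then (1 : ℤ) else 0) * x ^ P.card := by
          by_cases h : ∀ e ∈ M, pairF e ∉ P <;> simp [h]
      _ = (∏ e ∈ M, ((-(if pairF e ∈ P then (1 : ℤ) else 0)) + 1)) * x ^ P.card := by
          rw [Finset.prod_congr rfl (fun e _ => hfac e),
            myProdIteZero M (fun e => pairF e ∈ P)]
          by_cases h : ∀ e ∈ M, pairF e ∉ P <;> simp [h]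
      _ = (∑ S ∈ M.powerset,
            (∏ e ∈ S, (-(if pairF e ∈ P then (1 : ℤ) else 0))) * ∏ _e ∈ M \ S, (1 : ℤ))
            * x ^ P.card := by
          rw [Finset.prod_add]
      _ = (∑ S ∈ M.powerset, (-1 : ℤ) ^ S.card *
            (if (∀ e ∈ S, pairF e ∈ P) then 1 else 0)) * x ^ P.card := by
          congr 1
          refine Finset.sum_congr rfl fun S _ => ?_
          rw [Finset.prod_const_one, mul_one]
          calc ∏ e ∈ S, (-(if pairF e ∈ P then (1 : ℤ) else 0))
              = ∏ e ∈ S, ((-1) * (if pairF e ∈ P then (1 : ℤ) else 0)) := by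
                refine Finset.prod_congr rfl fun e _ => ?_; ring
            _ = (-1 : ℤ) ^ S.card * ∏ e ∈ S, (if pairF e ∈ P then (1 : ℤ) else 0) := by
                rw [Finset.prod_mul_distrib, Finset.prod_const]
            _ = (-1 : ℤ) ^ S.card * (if (∀ e ∈ S, pairF e ∈ P) then 1 else 0) := by
                rw [_root_.myProdIteOne S (fun e => pairF e ∈ P)]
                by_cases h : ∀ e ∈ S, pairF e ∈ P <;> simp [h]
      _ = ∑ S ∈ M.powerset, (-1 : ℤ) ^ S.card *
            (if (∀ e ∈ S, pairF e ∈ P) then x ^ P.card else 0) := by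
          rw [Finset.sum_mul]
          refine Finset.sum_congr rfl fun S _ => ?_
          by_cases h : ∀ e ∈ S, pairF e ∈ P <;> simp [h, mul_assoc]
  rw [Finset.sum_congr rfl (fun P _ => key P), Finset.sum_comm]
  have inner : ∀ S ∈ M.powerset,
      ∑ P ∈ Finset.univ.filter (fun P : Finset (Finset (Fin n)) => IsPartition P),
        (-1 : ℤ) ^ S.card * (if (∀ e ∈ S, pairF e ∈ P) then x ^ P.card else 0)
      = (-1 : ℤ) ^ S.card * ∑ j ∈ Finset.range (n - 2 * S.card + 1),
          (stirlingSnd (n - 2 * S.card) j : ℤ) * x ^ (S.card + j) := by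
    intro S hSmem
    have hS : S ⊆ M := Finset.mem_powerset.1 hSmem
    rw [← Finset.mul_sum]
    congr 1
    rw [← sum_parts_containing M hME hmatch S hS x]
    rw [Finset.sum_filter, Finset.sum_filter]
    refine Finset.sum_congr rfl fun P _ => ?_
    by_cases h1 : IsPartition P <;> by_cases h2 : ∀ e ∈ S, pairF e ∈ P <;> simp [h1, h2]
  rw [Finset.sum_congr rfl inner]
  rw [Finset.powerset_card_biUnion,
    Finset.sum_biUnion ((Finset.pairwise_disjoint_powersetCard M).set_pairwise _), hcard]
  refine Finset.sum_congr rfl fun i hi => ?_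
  have hconst : ∀ S ∈ Finset.powersetCard i M,
      ((-1 : ℤ) ^ S.card * ∑ j ∈ Finset.range (n - 2 * S.card + 1),
          (stirlingSnd (n - 2 * S.card) j : ℤ) * x ^ (S.card + j))
      = ((-1 : ℤ) ^ i * ∑ j ∈ Finset.range (n - 2 * i + 1),
          (stirlingSnd (n - 2 * i) j : ℤ) * x ^ (i + j)) := by
    intro S hSm
    rw [(Finset.mem_powersetCard.1 hSm).2]
  rw [Finset.sum_congr rfl hconst, Finset.sum_const, Finset.card_powersetCard, hcard,
    nsmul_eq_mul, ← mul_assoc, Finset.mul_sum]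
  exact Finset.sum_congr rfl fun j _ => by ring
end
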